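/- Let I = ⟨x_{i_1}^{a_1},...,x_{i_k}^{a_k}⟩ with 1 ≤ a_1 ≤ ... ≤ a_k and k ≥ 2, in a polynomial ring S over a field. Then for all n ≥ 1: n·a_1 + ⌈a_2/a_1 − a_2/a_k⌉ − 1 ≤ v(\overline{I^n}) ≤ n·a_1 + ⌈a_k/a_1⌉ − 2. -/

import Mathlib

open MvPolynomial Ideal

/-- The integral closure of an ideal. -/
noncomputable def intClosure {R : Type*} [CommRing R] (I : Ideal R) : Ideal R :=
  Ideal.span {x : R | ∃ n : ℕ, 0 < n ∧ ∃ c : ℕ → R,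
    (∀ i ∈ Finset.Icc 1 n, c i ∈ I ^ i) ∧
    x ^ n + ∑ i ∈ Finset.Icc 1 n, c i * x ^ (n - i) = 0}

/-- The v-number of a homogeneous ideal `J`. -/
noncomputable def vnumber {K : Type*} [Field K] {σ : Type*}
    (J : Ideal (MvPolynomial σ K)) : ℕ :=
  sInf {d : ℕ | ∃ f : MvPolynomial σ K, f.IsHomogeneous d ∧
    Submodule.colon J (Ideal.span {f}) ∈
      associatedPrimes (MvPolynomial σ K) (MvPolynomial σ K ⧸ J)}

namespace VNumAux

variable {K : Type*} [Field K] {σ : Type*} {k : ℕ}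

/-- The weight of an exponent vector. -/
def W (i : Fin k → σ) (a : Fin k → ℕ) (n : ℕ) (μ : σ →₀ ℕ) : ℚ :=
  ∑ l : Fin k, (μ (i l) : ℚ) / ((n : ℚ) * (a l : ℚ))

variable (i : Fin k → σ) (a : Fin k → ℕ) (n : ℕ)

theorem W_nonneg (μ : σ →₀ ℕ) : 0 ≤ W i a n μ :=
  Finset.sum_nonneg fun l _ => by positivity

theorem W_add (μ ν : σ →₀ ℕ) : W i a n (μ + ν) = W i a n μ + W i a n ν := by
  simp only [W, Finsupp.add_apply, Nat.cast_add, add_div, Finset.sum_add_distrib]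

theorem W_single (hi : Function.Injective i) (l : Fin k) (c : ℕ) :
    W i a n (Finsupp.single (i l) c) = (c : ℚ) / ((n : ℚ) * (a l : ℚ)) := by
  classical
  rw [W, Finset.sum_eq_single l]
  · simp [Finsupp.single_apply]
  · intro l' _ hne
    rw [Finsupp.single_apply, if_neg fun h => hne (hi h).symm]
    simp
  · simp

theorem W_zero : W i a n 0 = 0 := by simp [W]

/-- The monomial ideal of polynomials all of whose monomials have weight at least `t`. -/
def Mq (t : ℚ) : Ideal (MvPolynomial σ K) where
  carrier := {p | ∀ μ ∈ p.support, t ≤ W i a n μ}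
  zero_mem' := by simp
  add_mem' := by
    classical
    intro p q hp hq μ hμ
    rcases Finset.mem_union.1 (MvPolynomial.support_add hμ) with h | h
    exacts [hp μ h, hq μ h]
  smul_mem' := by
    classical
    intro r p hp μ hμ
    rw [smul_eq_mul] at hμ
    obtain ⟨ν, hν, ρ, hρ, rfl⟩ := Finset.mem_add.1 (MvPolynomial.support_mul _ _ hμ)
    calc t ≤ 0 + t := by simp
    _ ≤ W i a n ν + W i a n ρ := add_le_add (W_nonneg i a n ν) (hp ρ hρ)
    _ = W i a n (ν + ρ) := (W_add i a n ν ρ).symm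

theorem mem_Mq {t : ℚ} {p : MvPolynomial σ K} :
    p ∈ Mq (K := K) i a n t ↔ ∀ μ ∈ p.support, t ≤ W i a n μ := Iff.rfl

theorem Mq_mono {s t : ℚ} (h : s ≤ t) : Mq (K := K) i a n t ≤ Mq (K := K) i a n s :=
  fun _ hp μ hμ => le_trans h (hp μ hμ)

theorem mul_mem_Mq {s t : ℚ} {p q : MvPolynomial σ K} (hp : p ∈ Mq (K := K) i a n s)
    (hq : q ∈ Mq (K := K) i a n t) : p * q ∈ Mq (K := K) i a n (s + t) := by
  classical
  intro μ hμ
  obtain ⟨ν, hν, ρ, hρ, rfl⟩ := Finset.mem_add.1 (MvPolynomial.support_mul _ _ hμ)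
  rw [W_add]
  exact add_le_add (hp ν hν) (hq ρ hρ)


section vmin

/-- the minimal weight of a monomial of `p` -/
noncomputable def vmin (p : MvPolynomial σ K) : ℚ :=
  if h : p.support.Nonempty then p.support.inf' h (W i a n) else 0

theorem vmin_le {p : MvPolynomial σ K} {μ : σ →₀ ℕ} (hμ : μ ∈ p.support) :
    vmin i a n p ≤ W i a n μ := by
  rw [vmin, dif_pos ⟨μ, hμ⟩]
  exact Finset.inf'_le _ hμ

theorem exists_vmin {p : MvPolynomial σ K} (hp : p ≠ 0) :
    ∃ μ ∈ p.support, W i a n μ = vmin i a n p := by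
  have h : p.support.Nonempty := MvPolynomial.support_nonempty.2 hp
  rw [vmin, dif_pos h]
  obtain ⟨μ, hμ, hw⟩ := Finset.exists_mem_eq_inf' h (W i a n)
  exact ⟨μ, hμ, hw.symm⟩

theorem vmin_nonneg (p : MvPolynomial σ K) : 0 ≤ vmin i a n p := by
  by_cases hp : p = 0
  · simp [vmin, hp]
  · obtain ⟨μ, _, hw⟩ := exists_vmin i a n hp
    exact hw ▸ W_nonneg i a n μ

/-- the part of `p` of weight `t` -/
noncomputable def comp (t : ℚ) (p : MvPolynomial σ K) : MvPolynomial σ K :=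
  ∑ μ ∈ p.support.filter fun μ => W i a n μ = t, monomial μ (MvPolynomial.coeff μ p)

theorem coeff_comp (t : ℚ) (p : MvPolynomial σ K) (ν : σ →₀ ℕ) :
    MvPolynomial.coeff ν (comp i a n t p) =
      if W i a n ν = t then MvPolynomial.coeff ν p else 0 := by
  classical
  rw [comp, MvPolynomial.coeff_sum]
  simp only [MvPolynomial.coeff_monomial]
  rw [Finset.sum_ite_eq' (p.support.filter fun μ => W i a n μ = t) ν
    (fun μ => MvPolynomial.coeff μ p)]
  by_cases h1 : W i a n ν = t
  · rw [if_pos h1]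
    by_cases h2 : ν ∈ p.support
    · rw [if_pos (Finset.mem_filter.2 ⟨h2, h1⟩)]
    · rw [if_neg (fun hc => h2 (Finset.mem_filter.1 hc).1),
        MvPolynomial.notMem_support_iff.1 h2]
  · rw [if_neg (fun hc : ν ∈ p.support.filter fun μ => W i a n μ = t =>
      h1 (Finset.mem_filter.1 hc).2), if_neg h1]

theorem support_comp {t : ℚ} {p : MvPolynomial σ K} {μ : σ →₀ ℕ}
    (hμ : μ ∈ (comp i a n t p).support) : μ ∈ p.support ∧ W i a n μ = t := by
  have h := MvPolynomial.mem_support_iff.1 hμ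
  rw [coeff_comp] at h
  by_cases h1 : W i a n μ = t
  · rw [if_pos h1] at h
    exact ⟨MvPolynomial.mem_support_iff.2 h, h1⟩
  · rw [if_neg h1] at h; exact absurd rfl h

theorem support_sub_comp {t : ℚ} {p : MvPolynomial σ K} {μ : σ →₀ ℕ}
    (hμ : μ ∈ (p - comp i a n t p).support) : μ ∈ p.support ∧ W i a n μ ≠ t := by
  have h := MvPolynomial.mem_support_iff.1 hμ
  rw [MvPolynomial.coeff_sub, coeff_comp] at h
  by_cases h1 : W i a n μ = t
  · rw [if_pos h1, sub_self] at h; exact absurd rfl h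
  · rw [if_neg h1, sub_zero] at h
    exact ⟨MvPolynomial.mem_support_iff.2 h, h1⟩

theorem comp_vmin_ne_zero {p : MvPolynomial σ K} (hp : p ≠ 0) :
    comp i a n (vmin i a n p) p ≠ 0 := by
  obtain ⟨μ, hμ, hw⟩ := exists_vmin i a n hp
  intro hc
  have := coeff_comp i a n (vmin i a n p) p μ
  rw [hc, if_pos hw] at this
  exact MvPolynomial.mem_support_iff.1 hμ this.symm

theorem vmin_mul {p q : MvPolynomial σ K} (hp : p ≠ 0) (hq : q ≠ 0) :
    vmin i a n (p * q) = vmin i a n p + vmin i a n q := by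
  classical
  have hpq : p * q ≠ 0 := mul_ne_zero hp hq
  set s := vmin i a n p with hs
  set t := vmin i a n q with ht
  set P1 := comp i a n s p with hP1
  set P2 := comp i a n t q with hP2
  have h1 : P1 ≠ 0 := comp_vmin_ne_zero i a n hp
  have h2 : P2 ≠ 0 := comp_vmin_ne_zero i a n hq
  have h12 : P1 * P2 ≠ 0 := mul_ne_zero h1 h2
  -- the error term
  set E := P1 * (q - P2) + (p - P1) * q with hE
  have key : p * q = P1 * P2 + E := by ring
  -- all monomials of E have weight > s + t
  have hEw : ∀ μ ∈ E.support, s + t < W i a n μ := by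
    intro μ hμ
    rcases Finset.mem_union.1 (MvPolynomial.support_add hμ) with h | h
    · obtain ⟨ν, hν, ρ, hρ, rfl⟩ := Finset.mem_add.1 (MvPolynomial.support_mul _ _ h)
      obtain ⟨hν1, hν2⟩ := support_comp i a n hν
      obtain ⟨hρ1, hρ2⟩ := support_sub_comp i a n hρ
      rw [W_add, hν2]
      exact add_lt_add_of_le_of_lt le_rfl (lt_of_le_of_ne (vmin_le i a n hρ1) (Ne.symm hρ2))
    · obtain ⟨ν, hν, ρ, hρ, rfl⟩ := Finset.mem_add.1 (MvPolynomial.support_mul _ _ h)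
      obtain ⟨hν1, hν2⟩ := support_sub_comp i a n hν
      rw [W_add]
      have : s < W i a n ν := lt_of_le_of_ne (vmin_le i a n hν1) (Ne.symm hν2)
      exact add_lt_add_of_lt_of_le this (vmin_le i a n hρ)
  -- all monomials of P1 * P2 have weight exactly s + t
  have h12w : ∀ μ ∈ (P1 * P2).support, W i a n μ = s + t := by
    intro μ hμ
    obtain ⟨ν, hν, ρ, hρ, rfl⟩ := Finset.mem_add.1 (MvPolynomial.support_mul _ _ hμ)
    rw [W_add, (support_comp i a n hν).2, (support_comp i a n hρ).2]
  obtain ⟨ρ, hρ⟩ := MvPolynomial.support_nonempty.2 h12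
  have hρw : W i a n ρ = s + t := h12w ρ hρ
  have hρE : ρ ∉ E.support := fun hc => absurd (hEw ρ hc) (by rw [hρw]; exact lt_irrefl _)
  have hcoeff : MvPolynomial.coeff ρ (p * q) = MvPolynomial.coeff ρ (P1 * P2) := by
    rw [key, MvPolynomial.coeff_add, MvPolynomial.notMem_support_iff.1 hρE, add_zero]
  have hρpq : ρ ∈ (p * q).support :=
    MvPolynomial.mem_support_iff.2 (hcoeff ▸ MvPolynomial.mem_support_iff.1 hρ)
  -- conclude
  refine le_antisymm (hρw ▸ vmin_le i a n hρpq) ?_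
  obtain ⟨μ, hμ, hw⟩ := exists_vmin i a n hpq
  rw [← hw]
  obtain ⟨ν, hν, ρ', hρ', rfl⟩ := Finset.mem_add.1 (MvPolynomial.support_mul _ _ hμ)
  rw [W_add]
  exact add_le_add (vmin_le i a n hν) (vmin_le i a n hρ')

theorem vmin_one : vmin i a n (1 : MvPolynomial σ K) = 0 := by
  classical
  have h1 : (1 : MvPolynomial σ K) ≠ 0 := one_ne_zero
  obtain ⟨μ, hμ, hw⟩ := exists_vmin i a n h1
  have : μ = 0 := by
    have := MvPolynomial.mem_support_iff.1 hμ
    rw [MvPolynomial.coeff_one] at this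
    by_contra hc
    rw [if_neg (fun h => hc h.symm)] at this
    exact this rfl
  rw [← hw, this, W_zero]

theorem vmin_pow {x : MvPolynomial σ K} (hx : x ≠ 0) (m : ℕ) :
    vmin i a n (x ^ m) = (m : ℚ) * vmin i a n x := by
  induction m with
  | zero => simp [vmin_one]
  | succ m ih =>
    rw [pow_succ, vmin_mul i a n (pow_ne_zero m hx) hx, ih]
    push_cast; ring

end vmin


section closure

theorem prod_monomial_one (f : Fin k → (σ →₀ ℕ)) :
    ∏ l : Fin k, (monomial (f l) (1 : K)) = monomial (∑ l : Fin k, f l) 1 := by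
  classical
  induction (Finset.univ : Finset (Fin k)) using Finset.cons_induction with
  | empty => simp [MvPolynomial.monomial_zero']
  | cons x s hx ih =>
    rw [Finset.prod_cons, Finset.sum_cons, ih, MvPolynomial.monomial_mul, one_mul]

variable {I : Ideal (MvPolynomial σ K)}

theorem monomial_one_mem_pow (hi : Function.Injective i)
    (hI : I = Ideal.span (Set.range fun p => (X (i p) : MvPolynomial σ K) ^ a p))
    (b : σ →₀ ℕ) (e : Fin k → ℕ) (hle : ∀ l, e l * a l ≤ b (i l)) :
    monomial b (1 : K) ∈ I ^ (∑ l : Fin k, e l) := by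
  classical
  set s : σ →₀ ℕ := ∑ l : Fin k, Finsupp.single (i l) (e l * a l) with hs
  have hsapp : ∀ l, s (i l) = e l * a l := by
    intro l
    rw [hs, Finsupp.finset_sum_apply, Finset.sum_eq_single l]
    · simp
    · intro l' _ hne
      rw [Finsupp.single_apply, if_neg fun h => hne (hi h)]
    · simp
  have hsb : s ≤ b := by
    intro j
    by_cases hj : ∃ l, i l = j
    · obtain ⟨l, rfl⟩ := hj
      rw [hsapp l]; exact hle l
    · have : s j = 0 := by
        rw [hs, Finsupp.finset_sum_apply]
        refine Finset.sum_eq_zero fun l _ => ?_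
        rw [Finsupp.single_apply, if_neg fun h => hj ⟨l, h⟩]
      simp [this]
  have hprod : (monomial s (1 : K)) = ∏ l : Fin k, ((X (i l) : MvPolynomial σ K) ^ a l) ^ e l := by
    have : ∀ l : Fin k, ((X (i l) : MvPolynomial σ K) ^ a l) ^ e l
        = monomial (Finsupp.single (i l) (e l * a l)) (1 : K) := by
      intro l
      rw [← pow_mul, MvPolynomial.X_pow_eq_monomial, mul_comm]
    rw [Finset.prod_congr rfl fun l _ => this l, prod_monomial_one, hs]
  have hmem : (monomial s (1 : K)) ∈ I ^ (∑ l : Fin k, e l) := by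
    rw [hprod, ← Finset.prod_pow_eq_pow_sum]
    exact Ideal.prod_mem_prod fun l _ =>
      Ideal.pow_mem_pow (hI ▸ Ideal.subset_span ⟨l, rfl⟩) (e l)
  have : monomial b (1 : K) = monomial (b - s) 1 * monomial s 1 := by
    rw [MvPolynomial.monomial_mul, one_mul, tsub_add_cancel_of_le hsb]
  rw [this]
  exact Ideal.mul_mem_left _ _ hmem

variable (hn : 1 ≤ n) (ha : ∀ l, 1 ≤ a l)

include hn ha in
theorem monomial_mem_intClosure (hi : Function.Injective i)
    (hI : I = Ideal.span (Set.range fun p => (X (i p) : MvPolynomial σ K) ^ a p))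
    {μ : σ →₀ ℕ} (hμ : 1 ≤ W i a n μ) (c : K) :
    monomial μ c ∈ intClosure (I ^ n) := by
  classical
  set N : ℕ := ∏ l : Fin k, (n * a l) with hNdef
  have hdvd : ∀ l : Fin k, (n * a l) ∣ N := fun l =>
    Finset.dvd_prod_of_mem _ (Finset.mem_univ l)
  have hNpos : 0 < N := Finset.prod_pos fun l _ =>
    Nat.mul_pos hn (ha l)
  have hnal : ∀ l : Fin k, ((n : ℚ) * (a l : ℚ)) ≠ 0 := fun l => by
    have h1 : (0 : ℚ) < n := by exact_mod_cast hn
    have h2 : (0 : ℚ) < a l := by exact_mod_cast ha l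
    positivity
  set e : Fin k → ℕ := fun l => n * (μ (i l) * (N / (n * a l))) with he
  have heal : ∀ l, e l * a l = N * μ (i l) := by
    intro l
    rw [he]
    have : n * (μ (i l) * (N / (n * a l))) * a l = μ (i l) * (N / (n * a l) * (n * a l)) := by
      ring
    rw [this, Nat.div_mul_cancel (hdvd l), mul_comm]
  have hsum : n * N ≤ ∑ l : Fin k, e l := by
    have hq : ((n * N : ℕ) : ℚ) ≤ ((∑ l : Fin k, e l : ℕ) : ℚ) := by
      push_cast
      have hcast : ∀ l : Fin k, ((N / (n * a l) : ℕ) : ℚ) = (N : ℚ) / ((n : ℚ) * (a l : ℚ)) := by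
        intro l
        rw [Nat.cast_div (hdvd l) (by exact_mod_cast hnal l)]
        push_cast; ring
      calc (n : ℚ) * N = (n : ℚ) * N * 1 := by ring
      _ ≤ (n : ℚ) * N * W i a n μ := by
          have : (0:ℚ) ≤ (n:ℚ) * N := by positivity
          nlinarith
      _ = ∑ l : Fin k, (n : ℚ) * ((μ (i l) : ℚ) * ((N:ℚ) / ((n:ℚ) * (a l : ℚ)))) := by
          rw [W, Finset.mul_sum]
          refine Finset.sum_congr rfl fun l _ => ?_
          field_simp
      _ = ∑ l : Fin k, ((n * (μ (i l) * (N / (n * a l))) : ℕ) : ℚ) := by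
          refine Finset.sum_congr rfl fun l _ => ?_
          push_cast [hcast l]
          ring
    exact_mod_cast hq
  -- monomial (N • μ) 1 ∈ (I^n)^N
  have hNμ : monomial (N • μ) (1 : K) ∈ (I ^ n) ^ N := by
    rw [← pow_mul]
    refine Ideal.pow_le_pow_right hsum ?_
    refine monomial_one_mem_pow i a hi hI _ e fun l => ?_
    rw [heal l, Finsupp.smul_apply, smul_eq_mul]
  -- now the integral equation
  by_cases hc : c = 0
  · simp [hc]
  set x : MvPolynomial σ K := monomial μ c with hx
  have hxN : x ^ N ∈ (I ^ n) ^ N := by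
    rw [hx, MvPolynomial.monomial_pow, ← mul_one (c ^ N), ← MvPolynomial.C_mul_monomial]
    exact Ideal.mul_mem_left _ _ hNμ
  refine Ideal.subset_span ?_
  refine ⟨N, hNpos, fun j => if j = N then -(x ^ N) else 0, fun j hj => ?_, ?_⟩
  · dsimp only
    by_cases hjN : j = N
    · rw [if_pos hjN, hjN]
      exact neg_mem hxN
    · rw [if_neg hjN]; exact zero_mem _
  · dsimp only
    have : ∑ j ∈ Finset.Icc 1 N, (if j = N then -(x ^ N) else 0) * x ^ (N - j)
        = -(x ^ N) := by
      simp only [ite_mul, zero_mul]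
      rw [Finset.sum_ite_eq' (Finset.Icc 1 N) N]
      rw [if_pos (Finset.mem_Icc.2 ⟨hNpos, le_refl N⟩), Nat.sub_self, pow_zero, mul_one]
    rw [this, add_neg_cancel]

include hn ha in
theorem Mq_le_intClosure (hi : Function.Injective i)
    (hI : I = Ideal.span (Set.range fun p => (X (i p) : MvPolynomial σ K) ^ a p)) :
    Mq (K := K) i a n 1 ≤ intClosure (I ^ n) := by
  intro p hp
  rw [← MvPolynomial.support_sum_monomial_coeff p]
  exact Ideal.sum_mem _ fun μ hμ =>
    monomial_mem_intClosure i a n hn ha hi hI (hp μ hμ) _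

include hn ha in
theorem I_le_Mq (hi : Function.Injective i)
    (hI : I = Ideal.span (Set.range fun p => (X (i p) : MvPolynomial σ K) ^ a p)) :
    I ≤ Mq (K := K) i a n (1 / n) := by
  rw [hI, Ideal.span_le]
  rintro _ ⟨l, rfl⟩
  show ((X (i l) : MvPolynomial σ K) ^ a l) ∈ _
  classical
  intro μ hμ
  rw [MvPolynomial.X_pow_eq_monomial, MvPolynomial.support_monomial] at hμ
  rw [if_neg (one_ne_zero), Finset.mem_singleton] at hμ
  subst hμ
  rw [W_single i a n hi l (a l)]
  have h2 : ((a l : ℚ)) ≠ 0 := by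
    have := ha l; positivity
  rw [mul_comm, ← div_div, div_self h2]

include hn ha in
theorem intClosure_le_Mq (hi : Function.Injective i)
    (hI : I = Ideal.span (Set.range fun p => (X (i p) : MvPolynomial σ K) ^ a p)) :
    intClosure (I ^ n) ≤ Mq (K := K) i a n 1 := by
  have hn0 : ((n : ℚ)) ≠ 0 := by
    have : (0:ℚ) < n := by exact_mod_cast hn
    exact ne_of_gt this
  -- powers of I lie in the right weight ideals
  have hIm : ∀ m : ℕ, I ^ m ≤ Mq (K := K) i a n ((m : ℚ) / n) := by
    intro m
    induction m with
    | zero =>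
      rw [pow_zero, Nat.cast_zero, zero_div]
      intro p _ μ _
      exact W_nonneg i a n μ
    | succ m ih =>
      rw [pow_succ]
      refine Ideal.mul_le.2 fun r hr s hs => ?_
      have hmem := mul_mem_Mq i a n (ih hr) (I_le_Mq i a n hn ha hi hI hs)
      have : ((m : ℚ)) / n + 1 / n = ((m + 1 : ℕ) : ℚ) / n := by
        push_cast
        rw [← add_div]
      rwa [this] at hmem
  rw [intClosure, Ideal.span_le]
  rintro x ⟨N, hN, c, hc, heq⟩
  by_cases hx : x = 0
  · rw [hx]; exact zero_mem _
  show x ∈ Mq (K := K) i a n 1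
  by_contra hxM
  rw [mem_Mq] at hxM
  push_neg at hxM
  obtain ⟨μ0, hμ0, hμ0w⟩ := hxM
  set v := vmin i a n x with hv
  have hv1 : v < 1 := lt_of_le_of_lt (vmin_le i a n hμ0) hμ0w
  have hv0 : 0 ≤ v := vmin_nonneg i a n x
  have hxn : x ^ N = -∑ j ∈ Finset.Icc 1 N, c j * x ^ (N - j) :=
    eq_neg_of_add_eq_zero_left heq
  have hmem : x ^ N ∈ Mq (K := K) i a n ((N : ℚ) * v + (1 - v)) := by
    rw [hxn]
    refine neg_mem (Ideal.sum_mem _ fun j hj => ?_)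
    obtain ⟨hj1, hjN⟩ := Finset.mem_Icc.1 hj
    have hcj : c j ∈ Mq (K := K) i a n (j : ℚ) := by
      have h1 : c j ∈ I ^ (n * j) := by
        rw [pow_mul]; exact hc j hj
      have h2 := hIm (n * j) h1
      have : ((n * j : ℕ) : ℚ) / n = (j : ℚ) := by
        push_cast
        rw [mul_comm, mul_div_assoc, div_self hn0, mul_one]
      rwa [this] at h2
    have hxp : x ^ (N - j) ∈ Mq (K := K) i a n (((N - j : ℕ) : ℚ) * v) := by
      intro μ hμ
      have := vmin_le i a n hμ
      rwa [vmin_pow i a n hx (N - j)] at this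
    have hmul := mul_mem_Mq i a n hcj hxp
    refine Mq_mono i a n ?_ hmul
    have hcast : ((N - j : ℕ) : ℚ) = (N : ℚ) - (j : ℚ) := by
      rw [Nat.cast_sub hjN]
    rw [hcast]
    have hj1' : (1 : ℚ) ≤ (j : ℚ) := by exact_mod_cast hj1
    nlinarith
  have hxNne : x ^ N ≠ 0 := pow_ne_zero N hx
  obtain ⟨μ, hμ, hw⟩ := exists_vmin i a n hxNne
  have := hmem μ hμ
  rw [hw, vmin_pow i a n hx N] at this
  nlinarith

include hn ha in
theorem intClosure_eq_Mq (hi : Function.Injective i)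
    (hI : I = Ideal.span (Set.range fun p => (X (i p) : MvPolynomial σ K) ^ a p)) :
    intClosure (I ^ n) = Mq (K := K) i a n 1 :=
  le_antisymm (intClosure_le_Mq i a n hn ha hi hI) (Mq_le_intClosure i a n hn ha hi hI)

end closure

section prime

open Classical in
/-- kill the variables in the range of `i` -/
noncomputable def phi (i : Fin k → σ) : MvPolynomial σ K →+* MvPolynomial σ K :=
  (MvPolynomial.aeval fun j => if j ∈ Set.range i then (0 : MvPolynomial σ K) else X j).toRingHom

theorem span_X_eq_ker :
    Ideal.span (Set.range fun l => (X (i l) : MvPolynomial σ K)) = RingHom.ker (phi (K := K) i) := by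
  classical
  apply le_antisymm
  · rw [Ideal.span_le]
    rintro _ ⟨l, rfl⟩
    show phi (K := K) i (X (i l)) = 0
    rw [phi]
    simp only [AlgHom.toRingHom_eq_coe, RingHom.coe_coe, MvPolynomial.aeval_X]
    rw [if_pos (Set.mem_range_self l)]
  · intro f hf
    set P := Ideal.span (Set.range fun l => (X (i l) : MvPolynomial σ K)) with hP
    have hcomp : (Ideal.Quotient.mk P).comp (phi (K := K) i) = Ideal.Quotient.mk P := by
      apply MvPolynomial.ringHom_ext
      · intro r
        simp [phi]
      · intro j
        simp only [RingHom.comp_apply, phi, AlgHom.toRingHom_eq_coe, RingHom.coe_coe,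
          MvPolynomial.aeval_X]
        by_cases hj : j ∈ Set.range i
        · obtain ⟨l, rfl⟩ := hj
          rw [if_pos (Set.mem_range_self l), map_zero]
          exact (Ideal.Quotient.eq_zero_iff_mem.2 (Ideal.subset_span (Set.mem_range_self l))).symm
        · rw [if_neg hj]
    have : Ideal.Quotient.mk P f = 0 := by
      have := congrFun (congrArg (fun g => g.toFun) hcomp) f
      simp only [RingHom.toMonoidHom_eq_coe, OneHom.toFun_eq_coe, MonoidHom.toOneHom_coe,
        MonoidHom.coe_coe, RingHom.comp_apply] at this
      rw [← this, show phi (K := K) i f = 0 from hf, map_zero]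
    exact Ideal.Quotient.eq_zero_iff_mem.1 this

theorem isPrime_span_X :
    (Ideal.span (Set.range fun l => (X (i l) : MvPolynomial σ K))).IsPrime := by
  rw [span_X_eq_ker]
  exact RingHom.ker_isPrime _

/-- if `g` is not in the prime `P`, it has a monomial avoiding all the variables `i l` -/
theorem exists_monomial_avoiding {g : MvPolynomial σ K}
    (hg : g ∉ Ideal.span (Set.range fun l => (X (i l) : MvPolynomial σ K))) :
    ∃ μ ∈ g.support, ∀ l : Fin k, μ (i l) = 0 := by
  classical
  by_contra hc
  push_neg at hc
  apply hg
  rw [← MvPolynomial.support_sum_monomial_coeff g]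
  refine Ideal.sum_mem _ fun μ hμ => ?_
  obtain ⟨l, hl⟩ := hc μ hμ
  have hle : Finsupp.single (i l) 1 ≤ μ := by
    rw [Finsupp.single_le_iff]
    exact Nat.one_le_iff_ne_zero.2 hl
  have : monomial μ (MvPolynomial.coeff μ g)
      = monomial (μ - Finsupp.single (i l) 1) (MvPolynomial.coeff μ g) * X (i l) := by
    rw [MvPolynomial.X, MvPolynomial.monomial_mul, mul_one, tsub_add_cancel_of_le hle]
  rw [this]
  exact Ideal.mul_mem_left _ _ (Ideal.subset_span ⟨l, rfl⟩)

theorem W_eq_zero_of_avoiding {μ : σ →₀ ℕ} (h : ∀ l : Fin k, μ (i l) = 0) :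
    W i a n μ = 0 := by
  rw [W]
  refine Finset.sum_eq_zero fun l _ => ?_
  rw [h l]
  simp

end prime

section degree

theorem degree_add' (x y : σ →₀ ℕ) : (x + y).degree = x.degree + y.degree := by
  simp only [Finsupp.degree_eq_weight_one]
  exact map_add _ x y

theorem degree_single' (j : σ) (m : ℕ) : (Finsupp.single j m).degree = m := by
  simp only [Finsupp.degree_eq_weight_one]
  rw [Finsupp.weight_apply, Finsupp.sum_single_index]
  · simp
  · simp

theorem sum_le_degree (hi : Function.Injective i) (μ : σ →₀ ℕ) :
    ∑ l : Fin k, μ (i l) ≤ μ.degree := by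
  classical
  rw [show ∑ l : Fin k, μ (i l) = ∑ j ∈ Finset.univ.image i, μ j from
    (Finset.sum_image fun x _ y _ h => hi h).symm]
  rw [Finsupp.degree]
  rw [← Finset.sum_filter_ne_zero (Finset.univ.image i) (f := fun j => μ j)]
  refine Finset.sum_le_sum_of_subset fun j hj => ?_
  rw [Finset.mem_filter] at hj
  exact Finsupp.mem_support_iff.2 hj.2

end degree

end VNumAux

open VNumAux

set_option maxHeartbeats 1600000 in
/-- Bounds for the v-numbers of the integral closure filtration of an irreducible monomial
ideal `I = ⟨x_{i_1}^{a_1},…,x_{i_k}^{a_k}⟩` with `1 ≤ a_1 ≤ ⋯ ≤ a_k` and `k ≥ 2`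
(here `k = k'+2`):  for all `n ≥ 1`,
`n·a_1 + ⌈a_2/a_1 − a_2/a_k⌉ − 1 ≤ v(closure(I^n)) ≤ n·a_1 + ⌈a_k/a_1⌉ − 2`. -/
theorem vnumber_intClosure_pow_bounds
    {K : Type*} [Field K] {σ : Type*} (k' : ℕ) (i : Fin (k' + 2) → σ)
    (hi : Function.Injective i)
    (a : Fin (k' + 2) → ℕ) (ha1 : 1 ≤ a 0) (hmono : Monotone a)
    (I : Ideal (MvPolynomial σ K))
    (hI : I = Ideal.span (Set.range fun p => (X (i p) : MvPolynomial σ K) ^ a p))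
    (n : ℕ) (hn : 1 ≤ n) :
    (n : ℤ) * a 0 + ⌈(a 1 : ℚ) / (a 0 : ℚ) - (a 1 : ℚ) / (a (Fin.last (k' + 1)) : ℚ)⌉ - 1
        ≤ (vnumber (intClosure (I ^ n)) : ℤ) ∧
    (vnumber (intClosure (I ^ n)) : ℤ)
        ≤ (n : ℤ) * a 0 + ⌈(a (Fin.last (k' + 1)) : ℚ) / (a 0 : ℚ)⌉ - 2 := by
  classical
  have ha : ∀ l, 1 ≤ a l := fun l => le_trans ha1 (hmono (Fin.zero_le l))
  set lst : Fin (k' + 2) := Fin.last (k' + 1) with hlst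
  set J : Ideal (MvPolynomial σ K) := intClosure (I ^ n) with hJdef
  have hJ : J = Mq (K := K) i a n 1 := intClosure_eq_Mq i a n hn ha hi hI
  have hnq : (0 : ℚ) < n := by exact_mod_cast hn
  have haq : ∀ l, (0 : ℚ) < a l := fun l => by exact_mod_cast ha l
  have hA := haq 0
  have hAk := haq lst
  have hA1 := haq 1
  have h01 : a 0 ≤ a 1 := hmono (Fin.zero_le 1)
  have h1k : a 1 ≤ a lst := hmono (Fin.le_last 1)
  have h0k : a 0 ≤ a lst := hmono (Fin.le_last 0)
  have h01q : (a 0 : ℚ) ≤ a 1 := by exact_mod_cast h01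
  have h0kq : (a 0 : ℚ) ≤ a lst := by exact_mod_cast h0k
  set P : Ideal (MvPolynomial σ K) :=
    Ideal.span (Set.range fun l : Fin (k' + 2) => (X (i l) : MvPolynomial σ K)) with hP
  set S : Set ℕ := {d : ℕ | ∃ f : MvPolynomial σ K, f.IsHomogeneous d ∧
    Submodule.colon J (Ideal.span {f}) ∈
      associatedPrimes (MvPolynomial σ K) (MvPolynomial σ K ⧸ J)} with hS
  have hvn : vnumber J = sInf S := rfl
  -- the ceiling
  set c : ℕ := (⌈(a lst : ℚ) / (a 0 : ℚ)⌉).toNat with hcdef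
  have hceil1 : 1 ≤ ⌈(a lst : ℚ) / (a 0 : ℚ)⌉ := by
    have := Int.ceil_pos.2 (div_pos hAk hA)
    omega
  have hc1 : 1 ≤ c := by rw [hcdef]; omega
  have hcc : (c : ℤ) = ⌈(a lst : ℚ) / (a 0 : ℚ)⌉ := by rw [hcdef]; omega
  have hcq : ((c : ℚ)) = ((⌈(a lst : ℚ) / (a 0 : ℚ)⌉ : ℤ) : ℚ) := by exact_mod_cast hcc
  have hcub : (c : ℚ) < (a lst : ℚ) / (a 0 : ℚ) + 1 := by
    rw [hcq]; exact Int.ceil_lt_add_one _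
  have hclb : (a lst : ℚ) / (a 0 : ℚ) ≤ (c : ℚ) := by
    rw [hcq]; exact Int.le_ceil _
  have hna1 : 1 ≤ n * a 0 := Nat.one_le_iff_ne_zero.2 (Nat.mul_ne_zero (by omega) (by omega))
  -- the witness monomial
  set b : σ →₀ ℕ := Finsupp.single (i 0) (n * a 0 - 1) + Finsupp.single (i lst) (c - 1)
    with hbdef
  set f : MvPolynomial σ K := monomial b 1 with hfdef
  have hcast1 : ((n * a 0 - 1 : ℕ) : ℚ) = (n : ℚ) * (a 0 : ℚ) - 1 := by
    rw [Nat.cast_sub hna1]; push_cast; ring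
  have hcast2 : ((c - 1 : ℕ) : ℚ) = (c : ℚ) - 1 := by
    rw [Nat.cast_sub hc1]; push_cast; ring
  have hWb : W i a n b = ((n : ℚ) * (a 0 : ℚ) - 1) / ((n : ℚ) * (a 0 : ℚ))
      + ((c : ℚ) - 1) / ((n : ℚ) * (a lst : ℚ)) := by
    rw [hbdef, W_add, W_single i a n hi 0, W_single i a n hi lst, hcast1, hcast2]
  have e1 : ((n : ℚ) * (a 0 : ℚ) - 1) / ((n : ℚ) * (a 0 : ℚ))
      = 1 - 1 / ((n : ℚ) * (a 0 : ℚ)) := by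
    rw [sub_div, div_self (by positivity)]
  have hWblt : W i a n b < 1 := by
    rw [hWb, e1]
    have key : ((c : ℚ) - 1) * (a 0 : ℚ) < (a lst : ℚ) := by
      have h' : ((c : ℚ) - 1) < (a lst : ℚ) / (a 0 : ℚ) := by linarith
      have h'' := mul_lt_mul_of_pos_right h' hA
      rwa [div_mul_cancel₀ _ (ne_of_gt hA)] at h''
    have e2 : ((c : ℚ) - 1) / ((n : ℚ) * (a lst : ℚ)) < 1 / ((n : ℚ) * (a 0 : ℚ)) := by
      rw [div_lt_div_iff₀ (by positivity) (by positivity)]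
      nlinarith
    linarith
  have hWbl : ∀ l, 1 ≤ W i a n (Finsupp.single (i l) 1 + b) := by
    intro l
    rw [W_add, W_single i a n hi l, hWb, e1, Nat.cast_one]
    have halk : (a l : ℚ) ≤ (a lst : ℚ) := by exact_mod_cast hmono (Fin.le_last l)
    have e2 : 1 / ((n : ℚ) * (a lst : ℚ)) ≤ 1 / ((n : ℚ) * (a l : ℚ)) := by
      apply one_div_le_one_div_of_le (mul_pos hnq (haq l))
      nlinarith [haq l]
    have e3 : 1 / ((n : ℚ) * (a 0 : ℚ)) ≤ (c : ℚ) / ((n : ℚ) * (a lst : ℚ)) := by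
      rw [div_le_div_iff₀ (by positivity) (by positivity)]
      have h' : (a lst : ℚ) ≤ (c : ℚ) * (a 0 : ℚ) := by
        have h'' := mul_le_mul_of_nonneg_right hclb (le_of_lt hA)
        rwa [div_mul_cancel₀ _ (ne_of_gt hA)] at h''
      nlinarith
    have e4 : ((c : ℚ) - 1) / ((n : ℚ) * (a lst : ℚ))
        = (c : ℚ) / ((n : ℚ) * (a lst : ℚ)) - 1 / ((n : ℚ) * (a lst : ℚ)) := by
      rw [← sub_div]
    rw [e4]
    linarith
  -- homogeneity of the witness
  have hhom : f.IsHomogeneous ((n * a 0 - 1) + (c - 1)) := by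
    refine isHomogeneous_monomial _ ?_
    rw [hbdef, degree_add', degree_single', degree_single']
  -- the colon ideal of the witness is P
  have hcolon : Submodule.colon J (Ideal.span {f}) = P := by
    apply le_antisymm
    · intro g hg
      by_contra hgP
      obtain ⟨ν, hν, hν0⟩ := exists_monomial_avoiding i (hP ▸ hgP)
      have hgf : g * f ∈ J := Ideal.mem_colon_span_singleton.1 hg
      rw [hJ] at hgf
      have hmem : ν + b ∈ (g * f).support := by
        rw [MvPolynomial.mem_support_iff, hfdef, MvPolynomial.coeff_mul_monomial, mul_one]
        exact MvPolynomial.mem_support_iff.1 hν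
      have h1 := hgf _ hmem
      rw [W_add, W_eq_zero_of_avoiding i a n hν0, zero_add] at h1
      exact absurd h1 (not_le.2 hWblt)
    · rw [hP, Ideal.span_le]
      rintro _ ⟨l, rfl⟩
      show (X (i l) : MvPolynomial σ K) ∈ Submodule.colon J (Ideal.span {f})
      rw [Ideal.mem_colon_span_singleton]
      have hXf : (X (i l) : MvPolynomial σ K) * f
          = monomial (Finsupp.single (i l) 1 + b) 1 := by
        rw [hfdef, MvPolynomial.X, MvPolynomial.monomial_mul, one_mul]
      rw [hXf, hJ]
      intro μ hμ
      rw [MvPolynomial.support_monomial, if_neg one_ne_zero, Finset.mem_singleton] at hμ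
      subst hμ
      exact hWbl l
  -- P is an associated prime witnessed by f
  have hassoc : Submodule.colon J (Ideal.span {f}) ∈
      associatedPrimes (MvPolynomial σ K) (MvPolynomial σ K ⧸ J) := by
    rw [hcolon]
    refine ⟨hP ▸ isPrime_span_X i, Ideal.Quotient.mk J f, ?_⟩
    have hcol : (⊥ : Submodule (MvPolynomial σ K) (MvPolynomial σ K ⧸ J)).colon
        {Ideal.Quotient.mk J f} = P := by
      ext r
      rw [Submodule.mem_colon_singleton, ← hcolon, Ideal.mem_colon_span_singleton]
      rw [show r • Ideal.Quotient.mk J f = Ideal.Quotient.mk J (r * f) from by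
        rw [Algebra.smul_def, Ideal.Quotient.algebraMap_eq, ← _root_.map_mul]]
      rw [Submodule.mem_bot, Ideal.Quotient.eq_zero_iff_mem]
    rw [hcol, (isPrime_span_X (K := K) i : P.IsPrime).radical]
  have hmemS : ((n * a 0 - 1) + (c - 1) : ℕ) ∈ S := ⟨f, hhom, hassoc⟩
  -- the lower bound for every member of S
  have hlb : ∀ d ∈ S, (n : ℤ) * a 0
      + ⌈(a 1 : ℚ) / (a 0 : ℚ) - (a 1 : ℚ) / (a lst : ℚ)⌉ - 1 ≤ (d : ℤ) := by
    rintro d ⟨f, hf, hass⟩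
    obtain ⟨hprime, x, hx⟩ := hass
    have hfJ : f ∉ J := by
      intro hfJ
      apply hprime.ne_top
      rw [Ideal.eq_top_iff_one]
      exact Ideal.mem_colon_span_singleton.2 (by rwa [one_mul])
    have hXf : ∀ l, (X (i l) : MvPolynomial σ K) * f ∈ J := by
      intro l
      refine Ideal.mem_colon_span_singleton.1 (hprime.mem_of_pow_mem (n * a l) ?_)
      have hXJ : (X (i l) : MvPolynomial σ K) ^ (n * a l) ∈ J := by
        rw [hJ]
        intro μ hμ
        rw [MvPolynomial.X_pow_eq_monomial, MvPolynomial.support_monomial,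
          if_neg one_ne_zero, Finset.mem_singleton] at hμ
        subst hμ
        rw [W_single i a n hi l]
        rw [Nat.cast_mul, div_self (ne_of_gt (mul_pos hnq (haq l)))]
      exact Ideal.mem_colon_span_singleton.2 (Ideal.mul_mem_right f _ hXJ)
    have hf0 : f ≠ 0 := fun h => hfJ (h ▸ zero_mem J)
    obtain ⟨μ, hμ, hμw⟩ : ∃ μ ∈ f.support, W i a n μ < 1 := by
      by_contra hcon
      push_neg at hcon
      refine hfJ ?_
      rw [hJ]
      exact fun μ hμ => hcon μ hμ
    have hWl : ∀ l, 1 ≤ W i a n μ + 1 / ((n : ℚ) * (a l : ℚ)) := by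
      intro l
      have h1 : μ + Finsupp.single (i l) 1 ∈ (f * X (i l)).support := by
        rw [MvPolynomial.mem_support_iff, MvPolynomial.coeff_mul_X]
        exact MvPolynomial.mem_support_iff.1 hμ
      have h2 : f * X (i l) ∈ Mq (K := K) i a n 1 := by
        rw [← hJ, mul_comm]; exact hXf l
      have h3 := h2 _ h1
      rwa [W_add, W_single i a n hi l, Nat.cast_one] at h3
    have hdeg : μ.degree = d := by
      by_contra hne
      exact MvPolynomial.mem_support_iff.1 hμ (hf.coeff_eq_zero hne)
    have hsum : ∑ l : Fin (k' + 2), μ (i l) ≤ d := hdeg ▸ sum_le_degree i hi μ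
    -- arithmetic
    set b0 : ℚ := (μ (i 0) : ℚ) with hb0def
    set T : ℚ := ∑ l : Fin (k' + 1), (μ (i l.succ) : ℚ) with hTdef
    have hT0 : 0 ≤ T := Finset.sum_nonneg fun l _ => Nat.cast_nonneg _
    have hWsplit : W i a n μ = b0 / ((n : ℚ) * (a 0 : ℚ))
        + ∑ l : Fin (k' + 1), (μ (i l.succ) : ℚ) / ((n : ℚ) * (a l.succ : ℚ)) := by
      rw [W, Fin.sum_univ_succ]
    have hTle : ∑ l : Fin (k' + 1), (μ (i l.succ) : ℚ) / ((n : ℚ) * (a l.succ : ℚ))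
        ≤ T / ((n : ℚ) * (a 1 : ℚ)) := by
      rw [hTdef, Finset.sum_div]
      refine Finset.sum_le_sum fun l _ => ?_
      have h1l : (a 1 : ℚ) ≤ (a l.succ : ℚ) := by
        exact_mod_cast hmono (by rw [Fin.le_def, Fin.val_one, Fin.val_succ]; omega)
      apply div_le_div_of_nonneg_left (Nat.cast_nonneg _) (by positivity)
      nlinarith
    have hTnn : 0 ≤ ∑ l : Fin (k' + 1), (μ (i l.succ) : ℚ) / ((n : ℚ) * (a l.succ : ℚ)) :=
      Finset.sum_nonneg fun l _ => by positivity
    have hμ0lt : μ (i 0) < n * a 0 := by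
      have h1 : b0 / ((n : ℚ) * (a 0 : ℚ)) < 1 := by
        rw [hWsplit] at hμw
        linarith
      have h2 : b0 < (n : ℚ) * (a 0 : ℚ) := by
        rwa [div_lt_one (by positivity)] at h1
      rw [hb0def] at h2
      exact_mod_cast h2
    have hb0le : b0 ≤ (n : ℚ) * (a 0 : ℚ) - 1 := by
      have h1 : (μ (i 0) : ℚ) + 1 ≤ ((n * a 0 : ℕ) : ℚ) := by
        exact_mod_cast Nat.succ_le_of_lt hμ0lt
      push_cast at h1
      rw [hb0def]
      linarith
    have hF2 : 1 - 1 / ((n : ℚ) * (a lst : ℚ))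
        ≤ b0 / ((n : ℚ) * (a 0 : ℚ)) + T / ((n : ℚ) * (a 1 : ℚ)) := by
      have h1 := hWl lst
      rw [hWsplit] at h1
      linarith [hTle]
    have hbTd : b0 + T ≤ (d : ℚ) := by
      have h1 : μ (i 0) + ∑ l : Fin (k' + 1), μ (i (Fin.succ l)) ≤ d := by
        rw [← Fin.sum_univ_succ (fun l => μ (i l))]
        exact hsum
      have h2 : ((μ (i 0) + ∑ l : Fin (k' + 1), μ (i (Fin.succ l)) : ℕ) : ℚ) ≤ (d : ℚ) := by
        exact_mod_cast h1
      push_cast at h2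
      rw [hb0def, hTdef]
      exact h2
    -- clear denominators in hF2
    set Q : ℚ := (n : ℚ) * (a 0 : ℚ) * (a 1 : ℚ) * (a lst : ℚ) with hQdef
    have hQpos : 0 < Q := by rw [hQdef]; positivity
    have c1 : (1 / ((n : ℚ) * (a lst : ℚ))) * Q = (a 0 : ℚ) * (a 1 : ℚ) := by
      rw [hQdef]; field_simp
    have c2 : (b0 / ((n : ℚ) * (a 0 : ℚ))) * Q = b0 * ((a 1 : ℚ) * (a lst : ℚ)) := by
      rw [hQdef]; field_simp
    have c3 : (T / ((n : ℚ) * (a 1 : ℚ))) * Q = T * ((a 0 : ℚ) * (a lst : ℚ)) := by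
      rw [hQdef]; field_simp
    have hF2' : Q - (a 0 : ℚ) * (a 1 : ℚ)
        ≤ b0 * ((a 1 : ℚ) * (a lst : ℚ)) + T * ((a 0 : ℚ) * (a lst : ℚ)) := by
      have hmul := mul_le_mul_of_nonneg_right hF2 (le_of_lt hQpos)
      rw [sub_mul, one_mul, c1, add_mul, c2, c3] at hmul
      exact hmul
    have hkey : (a 1 : ℚ) / (a 0 : ℚ) - (a 1 : ℚ) / (a lst : ℚ)
        ≤ (d : ℚ) - (n : ℚ) * (a 0 : ℚ) + 1 := by
      rw [div_sub_div _ _ (ne_of_gt hA) (ne_of_gt hAk), div_le_iff₀ (by positivity)]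
      nlinarith [hF2', mul_nonneg (sub_nonneg.2 hb0le)
          (mul_nonneg (sub_nonneg.2 h01q) (le_of_lt hAk)),
        mul_nonneg (sub_nonneg.2 hbTd) (mul_nonneg (le_of_lt hA) (le_of_lt hAk))]
    have hceilkey : ⌈(a 1 : ℚ) / (a 0 : ℚ) - (a 1 : ℚ) / (a lst : ℚ)⌉
        ≤ (d : ℤ) - (n : ℤ) * a 0 + 1 := by
      refine Int.ceil_le.2 ?_
      push_cast
      linarith
    linarith
  refine ⟨?_, ?_⟩
  · have hne : S.Nonempty := ⟨_, hmemS⟩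
    have hmem := Nat.sInf_mem hne
    have h1 := hlb _ hmem
    rw [hvn]
    exact h1
  · have hub : vnumber J ≤ (n * a 0 - 1) + (c - 1) := by
      rw [hvn]
      exact Nat.sInf_le hmemS
    have h2 : ((vnumber J : ℕ) : ℤ) ≤ (((n * a 0 - 1) + (c - 1) : ℕ) : ℤ) := by
      exact_mod_cast hub
    rw [← hcc]
    have h3 : (((n * a 0 - 1) + (c - 1) : ℕ) : ℤ) = (n * a 0 : ℕ) + (c : ℤ) - 2 := by
      omega
    rw [h3] at h2
    push_cast at h2 ⊢
    linarith
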